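/- Let π be a partition of a finite set S into blocks {B_i, i∈I}, and J ⊆ I with |J| ≥ 2. The transition rate of the coalescent Π_{S,p} from π to the partition π^{⊕J} obtained by merging the blocks indexed by J equals ∑_{H⊆J} (-1)^{|H|} G_p(|B_{J∖H}|/|S|), where B_K = ∪_{j∈K} B_j and G_p is the generating function of p. -/

import Mathlib

/-- Probability generating function. -/
noncomputable def pgf (p : ℕ → ℝ) (s : ℝ) : ℝ := ∑' k : ℕ, p k * s ^ k

/-- Weight of a tuple `w` over a finite type `α` under the sampling measure `μ_{S,p}`:
`μ({w}) = p(ℓ(w)) / |S|^{ℓ(w)}`. -/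
noncomputable def tupleWeight (α : Type*) [Fintype α] (p : ℕ → ℝ) (w : List α) : ℝ :=
  p w.length / (Fintype.card α : ℝ) ^ w.length

section aux
variable {α : Type*} [Fintype α] [Nonempty α] [DecidableEq α]

lemma tw_nonneg (p : ℕ → ℝ) (hnn : ∀ k, 0 ≤ p k) (w : List α) : 0 ≤ tupleWeight α p w := by
  exact div_nonneg (hnn _) (by positivity)

lemma fiber_sum (p : ℕ → ℝ) (A : Finset α) (n : ℕ) :
    ∑ g : Fin n → α, (if ∀ i, g i ∈ A then tupleWeight α p (List.ofFn g) else 0)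
      = p n * ((A.card : ℝ) / (Fintype.card α : ℝ)) ^ n := by
  have h1 : ∀ g : Fin n → α,
      (if ∀ i, g i ∈ A then tupleWeight α p (List.ofFn g) else 0)
        = if g ∈ Fintype.piFinset (fun _ : Fin n => A) then
            p n / (Fintype.card α : ℝ) ^ n else 0 := by
    intro g
    simp [Fintype.mem_piFinset, tupleWeight]
  rw [Finset.sum_congr rfl (fun g _ => h1 g), Finset.sum_ite_mem,
    Finset.univ_inter, Finset.sum_const, Fintype.card_piFinset]
  have hc : (0:ℝ) < (Fintype.card α : ℝ) := by positivity
  field_simp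
  simp [Finset.prod_const]
  ring

lemma key_tsum (p : ℕ → ℝ) (hnn : ∀ k, 0 ≤ p k) (hp : Summable p) (A : Finset α) :
    Summable (fun w : List α => if ∀ x ∈ w, x ∈ A then tupleWeight α p w else 0) ∧
    (∑' w : List α, (if ∀ x ∈ w, x ∈ A then tupleWeight α p w else 0))
      = pgf p ((A.card : ℝ) / (Fintype.card α : ℝ)) := by
  set f : List α → ℝ := fun w => if ∀ x ∈ w, x ∈ A then tupleWeight α p w else 0 with hfdef
  set F : (Σ n, Fin n → α) → ℝ := fun s => f (List.equivSigmaTuple.symm s) with hFdef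
  have hFnn : ∀ s, 0 ≤ F s := by
    intro s
    simp only [hFdef, hfdef]
    split
    · exact tw_nonneg p hnn _
    · exact le_rfl
  have hr0 : (0:ℝ) ≤ (A.card : ℝ) / (Fintype.card α : ℝ) := by positivity
  have hr1 : (A.card : ℝ) / (Fintype.card α : ℝ) ≤ 1 := by
    rw [div_le_one (by positivity)]
    exact_mod_cast Finset.card_le_card (Finset.subset_univ A)
  have hfib : ∀ n : ℕ, (∑' g : Fin n → α, F ⟨n, g⟩)
      = p n * ((A.card : ℝ) / (Fintype.card α : ℝ)) ^ n := by
    intro n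
    rw [tsum_fintype]
    rw [← fiber_sum p A n]
    refine Finset.sum_congr rfl fun g _ => ?_
    simp only [hFdef, hfdef, List.equivSigmaTuple]
    simp [List.forall_mem_ofFn_iff]
  have hsummand : Summable (fun n : ℕ => p n * ((A.card : ℝ) / (Fintype.card α : ℝ)) ^ n) := by
    apply Summable.of_nonneg_of_le (fun n => mul_nonneg (hnn n) (pow_nonneg hr0 n)) _ hp
    intro n
    calc p n * ((A.card : ℝ) / (Fintype.card α : ℝ)) ^ n
        ≤ p n * 1 := by
          apply mul_le_mul_of_nonneg_left _ (hnn n)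
          exact pow_le_one₀ hr0 hr1
      _ = p n := mul_one _
  have hFs : Summable F := by
    apply (summable_sigma_of_nonneg hFnn).2
    constructor
    · intro n; exact Summable.of_finite
    · simpa only [hfib] using hsummand
  have hfs : Summable f := by
    rw [← Equiv.summable_iff List.equivSigmaTuple.symm]
    exact hFs
  refine ⟨hfs, ?_⟩
  rw [← Equiv.tsum_eq List.equivSigmaTuple.symm f]
  rw [Summable.tsum_sigma' (fun n => Summable.of_finite) hFs]
  simp only [hfib]
  rfl
end aux

lemma neg_one_pow_sum_real {β : Type*} [DecidableEq β] (T : Finset β) :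
    (∑ H ∈ T.powerset, (-1 : ℝ) ^ H.card) = if T = ∅ then 1 else 0 := by
  have := Finset.sum_powerset_neg_one_pow_card (x := T)
  have h2 : ((∑ m ∈ T.powerset, (-1 : ℤ) ^ m.card : ℤ) : ℝ)
      = ∑ H ∈ T.powerset, (-1 : ℝ) ^ H.card := by push_cast; rfl
  rw [← h2, this]
  split <;> simp

lemma pointwise {α I : Type*} [Fintype α] [Nonempty α] [DecidableEq α] [DecidableEq I]
    (p : ℕ → ℝ) (hz : p 0 = 0)
    (B : I → Finset α)
    (hdisj : ∀ i j, i ≠ j → Disjoint (B i) (B j))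
    (J : Finset I) (w : List α) :
    (if w ≠ [] ∧ (∀ x ∈ w, x ∈ J.biUnion B) ∧ (∀ j ∈ J, ∃ x ∈ w, x ∈ B j)
          then tupleWeight α p w else 0)
      = ∑ H ∈ J.powerset, (-1 : ℝ) ^ H.card *
          (if ∀ x ∈ w, x ∈ (J \ H).biUnion B then tupleWeight α p w else 0) := by
  rcases eq_or_ne w [] with hw | hw
  · subst hw
    have : tupleWeight α p [] = 0 := by simp [tupleWeight, hz]
    simp [this]
  · by_cases hsub : ∀ x ∈ w, x ∈ J.biUnion B
    · set T := J.filter (fun j => ∀ x ∈ w, x ∉ B j) with hT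
      have hTJ : T ⊆ J := Finset.filter_subset _ _
      have key : ∀ H ∈ J.powerset, ((∀ x ∈ w, x ∈ (J \ H).biUnion B) ↔ H ⊆ T) := by
        intro H hH
        rw [Finset.mem_powerset] at hH
        constructor
        · intro hall j hjH
          rw [hT, Finset.mem_filter]
          refine ⟨hH hjH, fun x hx hxB => ?_⟩
          obtain ⟨j', hj', hxB'⟩ := Finset.mem_biUnion.1 (hall x hx)
          have hjj' : j ≠ j' := fun h => (Finset.mem_sdiff.1 hj').2 (h ▸ hjH)
          exact (Finset.disjoint_left.1 (hdisj j j' hjj') hxB) hxB'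
        · intro hHT x hx
          obtain ⟨j, hj, hxB⟩ := Finset.mem_biUnion.1 (hsub x hx)
          refine Finset.mem_biUnion.2 ⟨j, Finset.mem_sdiff.2 ⟨hj, fun hjH => ?_⟩, hxB⟩
          exact (Finset.mem_filter.1 (hHT hjH)).2 x hx hxB
      have hrhs : ∑ H ∈ J.powerset, (-1 : ℝ) ^ H.card *
            (if ∀ x ∈ w, x ∈ (J \ H).biUnion B then tupleWeight α p w else 0)
          = (∑ H ∈ T.powerset, (-1 : ℝ) ^ H.card) * tupleWeight α p w := by
        rw [Finset.sum_mul]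
        rw [← Finset.sum_subset (Finset.powerset_mono.2 hTJ)]
        · refine Finset.sum_congr rfl fun H hH => ?_
          rw [if_pos ((key H (Finset.powerset_mono.2 hTJ hH)).2 (Finset.mem_powerset.1 hH))]
        · intro H hH hHT
          rw [if_neg, mul_zero]
          rw [key H hH]
          exact fun h => hHT (Finset.mem_powerset.2 h)
      rw [hrhs, neg_one_pow_sum_real]
      have hTiff : T = ∅ ↔ ∀ j ∈ J, ∃ x ∈ w, x ∈ B j := by
        rw [hT, Finset.filter_eq_empty_iff]
        push_neg
        simp
      by_cases hTe : T = ∅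
      · rw [if_pos hTe, one_mul, if_pos ⟨hw, hsub, hTiff.1 hTe⟩]
      · rw [if_neg hTe, zero_mul, if_neg]
        rintro ⟨-, -, h3⟩
        exact hTe (hTiff.2 h3)
    · rw [if_neg (fun h => hsub h.2.1)]
      refine (Finset.sum_eq_zero fun H hH => ?_).symm
      rw [if_neg, mul_zero]
      intro h
      exact hsub fun x hx => Finset.biUnion_subset_biUnion_of_subset_left B
        (Finset.sdiff_subset) (h x hx)


/-- transition rate of the coalescent `Π_{S,p}` from `π` to `π^{⊕J}`:
the `μ_{S,p}`-measure of tuples contained in `B_J` meeting every block `B_j`, `j ∈ J`,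
equals `∑_{H⊆J} (-1)^{|H|} G_p(|B_{J∖H}|/|S|)`. -/
theorem stmt13 {α I : Type*} [Fintype α] [Nonempty α] [DecidableEq α] [DecidableEq I]
    (p : ℕ → ℝ) (hz : p 0 = 0) (hnn : ∀ k, 0 ≤ p k) (hsum : ∑' k : ℕ, p k = 1)
    (B : I → Finset α) (hne : ∀ i, (B i).Nonempty)
    (hdisj : ∀ i j, i ≠ j → Disjoint (B i) (B j))
    (J : Finset I) (hJ : 2 ≤ J.card) :
    (∑' w : List α,
        (if w ≠ [] ∧ (∀ x ∈ w, x ∈ J.biUnion B) ∧ (∀ j ∈ J, ∃ x ∈ w, x ∈ B j)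
          then tupleWeight α p w else 0)) =
      ∑ H ∈ J.powerset, (-1 : ℝ) ^ H.card *
        pgf p ((((J \ H).biUnion B).card : ℝ) / (Fintype.card α : ℝ)) := by
  have hp : Summable p := by
    by_contra h
    rw [tsum_eq_zero_of_not_summable h] at hsum
    norm_num at hsum
  have hkey := fun A : Finset α => key_tsum p hnn hp A
  calc (∑' w : List α,
        (if w ≠ [] ∧ (∀ x ∈ w, x ∈ J.biUnion B) ∧ (∀ j ∈ J, ∃ x ∈ w, x ∈ B j)
          then tupleWeight α p w else 0))
      = ∑' w : List α, ∑ H ∈ J.powerset, (-1 : ℝ) ^ H.card *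
          (if ∀ x ∈ w, x ∈ (J \ H).biUnion B then tupleWeight α p w else 0) :=
        tsum_congr fun w => pointwise p hz B hdisj J w
    _ = ∑ H ∈ J.powerset, ∑' w : List α, (-1 : ℝ) ^ H.card *
          (if ∀ x ∈ w, x ∈ (J \ H).biUnion B then tupleWeight α p w else 0) := by
        apply Summable.tsum_finsetSum
        intro H hH
        exact ((hkey ((J \ H).biUnion B)).1).mul_left _
    _ = ∑ H ∈ J.powerset, (-1 : ℝ) ^ H.card *
        pgf p ((((J \ H).biUnion B).card : ℝ) / (Fintype.card α : ℝ)) := by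
        refine Finset.sum_congr rfl fun H hH => ?_
        rw [tsum_mul_left, (hkey ((J \ H).biUnion B)).2]
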